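/- If a t-norm T is general pseudo-homogeneous for F, then for all x,y∈[0,1] with (x,y)≠(0,0), T(x,y)=F(max{x,y}, min{x,y}/max{x,y}). -/
import Mathlib


open Set Filter Topology

def IsTnorm (T : ℝ → ℝ → ℝ) : Prop :=
  (∀ x ∈ Set.Icc (0:ℝ) 1, ∀ y ∈ Set.Icc (0:ℝ) 1, T x y ∈ Set.Icc (0:ℝ) 1) ∧
  (∀ x ∈ Set.Icc (0:ℝ) 1, ∀ y ∈ Set.Icc (0:ℝ) 1, T x y = T y x) ∧
  (∀ x ∈ Set.Icc (0:ℝ) 1, ∀ y ∈ Set.Icc (0:ℝ) 1, ∀ z ∈ Set.Icc (0:ℝ) 1,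
      T x (T y z) = T (T x y) z) ∧
  (∀ x ∈ Set.Icc (0:ℝ) 1, ∀ y ∈ Set.Icc (0:ℝ) 1, ∀ z ∈ Set.Icc (0:ℝ) 1,
      y ≤ z → T x y ≤ T x z) ∧
  (∀ x ∈ Set.Icc (0:ℝ) 1, T x 1 = x)

def IsGPH (T F : ℝ → ℝ → ℝ) : Prop :=
  ∀ lam ∈ Set.Icc (0:ℝ) 1, ∀ x ∈ Set.Icc (0:ℝ) 1, ∀ y ∈ Set.Icc (0:ℝ) 1,
    T (lam * x) (lam * y) = F lam (T x y)

noncomputable def TD : ℝ → ℝ → ℝ := fun x y => if max x y = 1 then min x y else 0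

lemma T_from_F_aux (T F : ℝ → ℝ → ℝ) (hT : IsTnorm T) (h : IsGPH T F)
    (x y : ℝ) (hx : x ∈ Set.Icc (0:ℝ) 1) (hy : y ∈ Set.Icc (0:ℝ) 1)
    (hyx : y ≤ x) (hx0 : 0 < x) : T x y = F x (y / x) := by
  obtain ⟨_, hcomm, _, _, hunit⟩ := hT
  have hq : y / x ∈ Set.Icc (0:ℝ) 1 :=
    ⟨div_nonneg hy.1 hx.1, div_le_one_of_le₀ hyx hx.1⟩
  have h1 : (1:ℝ) ∈ Set.Icc (0:ℝ) 1 := ⟨zero_le_one, le_refl 1⟩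
  have key := h x hx 1 h1 (y/x) hq
  rw [mul_one, mul_div_cancel₀ _ (ne_of_gt hx0)] at key
  rw [key, hcomm 1 h1 (y/x) hq, hunit _ hq]

theorem T_from_F (T F : ℝ → ℝ → ℝ) (hT : IsTnorm T) (h : IsGPH T F) :
    ∀ x ∈ Set.Icc (0:ℝ) 1, ∀ y ∈ Set.Icc (0:ℝ) 1, (x, y) ≠ ((0:ℝ), (0:ℝ)) →
      T x y = F (max x y) (min x y / max x y) := by
  intro x hx y hy hne
  rcases le_total y x with hle | hle
  · have hx0 : 0 < x := by
      rcases lt_or_eq_of_le hx.1 with h0 | h0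
      · exact h0
      · exfalso; apply hne
        have : y = 0 := le_antisymm (h0 ▸ hle) hy.1
        simp [← h0, this]
    rw [max_eq_left hle, min_eq_right hle]
    exact T_from_F_aux T F hT h x y hx hy hle hx0
  · have hy0 : 0 < y := by
      rcases lt_or_eq_of_le hy.1 with h0 | h0
      · exact h0
      · exfalso; apply hne
        have : x = 0 := le_antisymm (h0 ▸ hle) hx.1
        simp [← h0, this]
    rw [max_eq_right hle, min_eq_left hle, hT.2.1 x hx y hy]
    exact T_from_F_aux T F hT h y x hy hx hle hy0
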